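/- There exist invertible matrices A ∈ GL_n(k) and C ∈ GL_{n−1}(k) and a k-algebra automorphism σ of R induced by an invertible linear change of the variables x_1,…,x_d, such that the matrix φ' obtained by applying σ to every entry of A·φ·C has the form φ' = x_1·E_u + x_2·M_2 + … + x_d·M_d, where u is the least integer (1 ≤ u ≤ n−d) with ht I_{u+1}(φ) = d−1, E_u is the n×(n−1) matrix over k whose (i,i) entries equal 1 for 1 ≤ i ≤ u and whose other entries are 0, and M_2,…,M_d are n×(n−1) matrices over k. -/

import Mathlib

open MvPolynomial Matrix

/-- The ideal generated by all `j × j` minors of a matrix. -/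
noncomputable def minorsIdeal {A : Type*} [CommRing A] {p q : ℕ}
    (M : Matrix (Fin p) (Fin q) A) (j : ℕ) : Ideal A :=
  Ideal.span { x | ∃ (r : Fin j → Fin p) (c : Fin j → Fin q),
    Function.Injective r ∧ Function.Injective c ∧ x = (M.submatrix r c).det }

/-- The height of an ideal: the infimum of the heights of the primes containing it. -/
noncomputable def idealHeight {A : Type*} [CommRing A] (I : Ideal A) : ℕ∞ :=
  ⨅ (P : PrimeSpectrum A) (_ : I ≤ P.asIdeal), Order.height P



-- sum of function supported on range of injective map
lemma sum_range_inj {n u : ℕ} {M : Type*} [AddCommMonoid M] (r : Fin u → Fin n)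
    (hr : Function.Injective r) (f : Fin n → M)
    (hf : ∀ j, j ∉ Set.range r → f j = 0) : ∑ j, f j = ∑ a, f (r a) := by
  classical
  have h1 : ∑ j, f j = ∑ j ∈ Finset.univ.image r, f j := by
    symm
    apply Finset.sum_subset (Finset.subset_univ _)
    intro j _ hj
    apply hf
    rintro ⟨a, rfl⟩
    exact hj (Finset.mem_image_of_mem _ (Finset.mem_univ a))
  rw [h1, Finset.sum_image (fun a _ b _ h => hr h)]

-- degree-1 homogeneous decomposition
lemma homog_decomp {k : Type*} [CommRing k] {d : ℕ} (p : MvPolynomial (Fin d) k)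
    (hp : p.IsHomogeneous 1) :
    p = ∑ a : Fin d, MvPolynomial.C (MvPolynomial.coeff (Finsupp.single a 1) p) * MvPolynomial.X a := by
  have key : ∀ m ∈ p.support, ∃ a : Fin d, m = Finsupp.single a 1 := by
    intro m hm
    have hdeg0 : m.degree = 1 := by
      rw [Finsupp.degree_eq_weight_one]
      exact hp (MvPolynomial.mem_support_iff.mp hm)
    have hdeg : ∑ i ∈ m.support, m i = 1 := hdeg0
    have hne : m.support.Nonempty := by
      by_contra h
      rw [Finset.not_nonempty_iff_eq_empty] at h
      rw [h] at hdeg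
      simp at hdeg
    obtain ⟨a, ha⟩ := hne
    have hma : m a ≠ 0 := Finsupp.mem_support_iff.mp ha
    have hsupp : m.support = {a} := by
      apply Finset.eq_singleton_iff_unique_mem.mpr
      refine ⟨ha, fun b hb => ?_⟩
      by_contra hba
      have h2 : 2 ≤ ∑ i ∈ m.support, m i := by
        have : ({a, b} : Finset (Fin d)) ⊆ m.support := by
          intro x hx
          simp only [Finset.mem_insert, Finset.mem_singleton] at hx
          rcases hx with rfl | rfl
          · exact ha
          · exact hb
        calc 2 = 1 + 1 := rfl
        _ ≤ m a + m b := by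
            have := Finsupp.mem_support_iff.mp hb
            omega
        _ = ∑ i ∈ ({a, b} : Finset (Fin d)), m i := by
            rw [Finset.sum_insert (by simp [Ne.symm hba]), Finset.sum_singleton]
        _ ≤ ∑ i ∈ m.support, m i := Finset.sum_le_sum_of_subset this
      omega
    refine ⟨a, ?_⟩
    have := (Finsupp.support_eq_singleton.mp hsupp).2
    rw [this]
    congr 1
    rw [hsupp, Finset.sum_singleton] at hdeg
    exact hdeg
  conv_lhs => rw [p.as_sum]
  have himg : p.support ⊆ Finset.univ.image (fun a : Fin d => Finsupp.single a 1) := by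
    intro m hm
    obtain ⟨a, rfl⟩ := key m hm
    exact Finset.mem_image_of_mem _ (Finset.mem_univ a)
  rw [Finset.sum_subset himg ?_]
  · rw [Finset.sum_image ?_]
    · apply Finset.sum_congr rfl
      intro a _
      rw [MvPolynomial.C_mul_X_eq_monomial]
    · intro a _ b _ h
      exact Finsupp.single_left_injective one_ne_zero h
  · intro m _ hm
    rw [MvPolynomial.notMem_support_iff.mp hm, MvPolynomial.monomial_zero]

-- zeroLocus of span
lemma eval_zero_of_span {k : Type*} [Field k] {d : ℕ} {S : Set (MvPolynomial (Fin d) k)}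
    {x : Fin d → k} (h : ∀ g ∈ S, MvPolynomial.eval x g = 0) :
    ∀ p ∈ Ideal.span S, MvPolynomial.eval x p = 0 := by
  intro p hp
  have : Ideal.span S ≤ RingHom.ker (MvPolynomial.eval x) := Ideal.span_le.mpr h
  exact this hp

-- if all u-minors vanish, all (u+1)-minors vanish (over a comm ring)
lemma minors_step {k : Type*} [CommRing k] {n m u : ℕ} (ψ : Matrix (Fin n) (Fin m) k)
    (h : ∀ (r : Fin u → Fin n) (c : Fin u → Fin m), Function.Injective r →
      Function.Injective c → (ψ.submatrix r c).det = 0)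
    (r : Fin (u + 1) → Fin n) (c : Fin (u + 1) → Fin m) (hr : Function.Injective r)
    (hc : Function.Injective c) : (ψ.submatrix r c).det = 0 := by
  rw [Matrix.det_succ_row_zero]
  apply Finset.sum_eq_zero
  intro j _
  rw [Matrix.submatrix_submatrix]
  rw [h (r ∘ Fin.succ) (c ∘ j.succAbove) (hr.comp (Fin.succ_injective _))
    (hc.comp (Fin.succAbove_right_injective))]
  ring

lemma mem_span_X_of_constantCoeff {k : Type*} [CommRing k] {d : ℕ}
    {q : MvPolynomial (Fin d) k} (h : constantCoeff q = 0) :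
    q ∈ Ideal.span (Set.range (X : Fin d → MvPolynomial (Fin d) k)) := by
  rw [← Set.image_univ, mem_ideal_span_X_image]
  intro m hm
  by_contra hcon
  push_neg at hcon
  have hm0 : m = 0 := Finsupp.ext fun i => hcon i (Set.mem_univ i)
  rw [hm0] at hm
  rw [MvPolynomial.constantCoeff_eq] at h
  exact (MvPolynomial.mem_support_iff.mp hm) h

lemma exists_nonzero_zero {k : Type*} [Field k] [IsAlgClosed k] {d : ℕ}
    (J : Ideal (MvPolynomial (Fin d) k)) (hht : idealHeight J < (d : ℕ∞)) :
    ∃ x : Fin d → k, x ≠ 0 ∧ x ∈ MvPolynomial.zeroLocus k J := by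
  by_contra hcon
  push_neg at hcon
  -- every point of the zero locus is 0
  have hzl : ∀ x ∈ MvPolynomial.zeroLocus k J, x = (0 : Fin d → k) := by
    intro x hx
    by_contra hx0
    exact hcon x hx0 hx
  -- X a is in the radical of J
  have hXrad : ∀ a : Fin d, (X a : MvPolynomial (Fin d) k) ∈ J.radical := by
    intro a
    rw [← MvPolynomial.vanishingIdeal_zeroLocus_eq_radical (K := k)]
    rw [MvPolynomial.mem_vanishingIdeal_iff]
    intro x hx
    rw [hzl x hx]
    simp
  -- the chain of primes
  set f : ℕ → (MvPolynomial (Fin d) k →ₐ[k] MvPolynomial (Fin d) k) :=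
    fun t => aeval (fun i : Fin d => if (i : ℕ) < t then 0 else X i) with hf
  have hcomp : ∀ t : ℕ, (f (t+1)).comp (f t) = f (t+1) := by
    intro t
    apply MvPolynomial.algHom_ext
    intro i
    simp only [hf, AlgHom.comp_apply, aeval_X]
    by_cases h1 : (i : ℕ) < t
    · rw [if_pos h1, map_zero, if_pos (by omega)]
    · rw [if_neg h1, aeval_X]
  have hker : ∀ t : ℕ, (RingHom.ker (f t)).IsPrime := fun t => RingHom.ker_isPrime _
  have hmono : ∀ t : ℕ, RingHom.ker (f t) ≤ RingHom.ker (f (t+1)) := by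
    intro t q hq
    have : f (t+1) (f t q) = f (t+1) q := by rw [← AlgHom.comp_apply, hcomp]
    rw [RingHom.mem_ker] at hq ⊢
    rw [← this, hq, map_zero]
  have hstrict : ∀ t : ℕ, t < d → RingHom.ker (f t) < RingHom.ker (f (t+1)) := by
    intro t ht
    apply lt_of_le_of_ne (hmono t)
    intro heq
    have h1 : (X ⟨t, ht⟩ : MvPolynomial (Fin d) k) ∈ RingHom.ker (f (t+1)) := by
      rw [RingHom.mem_ker, hf]
      simp only [aeval_X]
      rw [if_pos (by omega)]
    rw [← heq, RingHom.mem_ker, hf] at h1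
    simp only [aeval_X] at h1
    rw [if_neg (by omega)] at h1
    exact MvPolynomial.X_ne_zero _ h1
  have hlast : ∀ q, q ∈ RingHom.ker (f d) →
      q ∈ Ideal.span (Set.range (X : Fin d → MvPolynomial (Fin d) k)) := by
    intro q hq
    rw [RingHom.mem_ker] at hq
    have heqf : f d q = C (constantCoeff q) := by
      have : (fun i : Fin d => if (i : ℕ) < d then 0 else X i) =
          (0 : Fin d → MvPolynomial (Fin d) k) := by
        funext i
        rw [if_pos i.isLt]
        rfl
      rw [hf]
      simp only [this]
      rw [aeval_zero]
      rfl
    rw [heqf] at hq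
    have : constantCoeff q = 0 := by
      have := MvPolynomial.C_injective (Fin d) k
      exact this (by rw [hq]; simp)
    exact mem_span_X_of_constantCoeff this
  -- height of any prime containing J is at least d
  have hbig : (d : ℕ∞) ≤ idealHeight J := by
    rw [idealHeight]
    apply le_iInf₂
    intro P hP
    -- build the LTSeries
    let s : LTSeries (PrimeSpectrum (MvPolynomial (Fin d) k)) :=
      ⟨d, fun t => ⟨RingHom.ker (f t), hker t⟩, by
        intro i
        exact hstrict i i.isLt⟩
    have hlastle : s.last ≤ P := by
      show (⟨RingHom.ker (f _), _⟩ : PrimeSpectrum _) ≤ P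
      change RingHom.ker (f ((Fin.last d) : ℕ)) ≤ P.asIdeal
      intro q hq
      have hq' := hlast q (by simpa using hq)
      have hXP : Ideal.span (Set.range (X : Fin d → MvPolynomial (Fin d) k)) ≤ P.asIdeal := by
        rw [Ideal.span_le]
        rintro _ ⟨a, rfl⟩
        have := hXrad a
        have hradP : J.radical ≤ P.asIdeal := P.isPrime.radical_le_iff.mpr hP
        exact hradP this
      exact hXP hq'
    have := Order.length_le_height hlastle
    simpa using this
  rw [lt_iff_not_ge] at hht
  exact hht hbig
section Aexists

variable {k : Type*} [Field k] {n u : ℕ}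

open scoped Classical in
/-- block diagonal-ish matrix with `U` in the top-left `u × u` corner and `1` elsewhere -/
noncomputable def auxKb (n : ℕ) (U : Matrix (Fin u) (Fin u) k) : Matrix (Fin n) (Fin n) k :=
  fun i j => if h : (i : ℕ) < u ∧ (j : ℕ) < u then U ⟨i, h.1⟩ ⟨j, h.2⟩
    else if i = j then 1 else 0

open scoped Classical in
/-- `n × u` matrix with `U` on the top `u × u` block and zero below -/
noncomputable def auxEW (n : ℕ) (U : Matrix (Fin u) (Fin u) k) : Matrix (Fin n) (Fin u) k :=
  fun i b => if h : (i : ℕ) < u then U ⟨i, h⟩ b else 0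

lemma auxKb_mul (hun : u ≤ n) (U V : Matrix (Fin u) (Fin u) k) :
    auxKb n U * auxKb n V = auxKb n (U * V) := by
  classical
  have hι : Function.Injective (fun a : Fin u => (⟨a, lt_of_lt_of_le a.isLt hun⟩ : Fin n)) := by
    intro a b hab
    injection hab with hab'
    exact Fin.ext hab'
  ext i j
  rw [Matrix.mul_apply]
  by_cases hi : (i : ℕ) < u
  · rw [sum_range_inj _ hι _ ?side]
    case side =>
      intro j' hj'
      have hj'u : ¬ (j' : ℕ) < u := by
        intro h
        exact hj' ⟨⟨j', h⟩, rfl⟩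
      simp only [auxKb]
      rw [dif_neg (by tauto), if_neg ?_]
      · ring
      · intro h
        rw [h] at hi
        exact hj'u hi
    by_cases hj : (j : ℕ) < u
    · have : ∀ a : Fin u,
        auxKb n U i ⟨a, lt_of_lt_of_le a.isLt hun⟩ * auxKb n V ⟨a, lt_of_lt_of_le a.isLt hun⟩ j
          = U ⟨i, hi⟩ a * V a ⟨j, hj⟩ := by
        intro a
        simp only [auxKb]
        rw [dif_pos ⟨hi, a.isLt⟩, dif_pos ⟨a.isLt, hj⟩]
      rw [Finset.sum_congr rfl (fun a _ => this a)]
      simp only [auxKb]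
      rw [dif_pos ⟨hi, hj⟩, Matrix.mul_apply]
    · rw [show auxKb n (U * V) i j = 0 by
        simp only [auxKb]
        rw [dif_neg (by tauto), if_neg (by intro h; rw [h] at hi; exact hj hi)]]
      apply Finset.sum_eq_zero
      intro a _
      have h2 : auxKb n V ⟨(a : ℕ), lt_of_lt_of_le a.isLt hun⟩ j = 0 := by
        simp only [auxKb]
        rw [dif_neg (fun hh => hj hh.2), if_neg ?_]
        intro h
        rw [← h] at hj
        exact hj a.isLt
      rw [h2, mul_zero]
  · have h1 : ∀ j', auxKb n U i j' = if i = j' then 1 else 0 := by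
      intro j'
      rw [auxKb, dif_neg (by tauto)]
    rw [Finset.sum_congr rfl (fun j' _ => by rw [h1 j'])]
    rw [Finset.sum_eq_single i ?h0 (by simp)]
    · rw [if_pos rfl, one_mul]
      simp only [auxKb]
      rw [dif_neg (by tauto), dif_neg (by tauto)]
    · intro j' _ hj'
      rw [if_neg (Ne.symm hj'), zero_mul]

lemma auxKb_one (hun : u ≤ n) : auxKb n (1 : Matrix (Fin u) (Fin u) k) = 1 := by
  classical
  ext i j
  simp only [auxKb]
  by_cases h : (i : ℕ) < u ∧ (j : ℕ) < u
  · rw [dif_pos h, Matrix.one_apply, Matrix.one_apply]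
    by_cases hij : i = j
    · rw [if_pos (by subst hij; rfl), if_pos hij]
    · rw [if_neg (by intro hh; injection hh with hh'; exact hij (Fin.ext hh')), if_neg hij]
  · rw [dif_neg h, Matrix.one_apply]

lemma auxKb_isUnit (hun : u ≤ n) {U : Matrix (Fin u) (Fin u) k} (hU : IsUnit U.det) :
    IsUnit (auxKb n U).det := by
  apply IsUnit.of_mul_eq_one (auxKb n U⁻¹).det
  rw [← Matrix.det_mul, auxKb_mul hun, Matrix.mul_nonsing_inv _ hU, auxKb_one hun, Matrix.det_one]

lemma auxKb_mul_EW (hun : u ≤ n) (U V : Matrix (Fin u) (Fin u) k) :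
    auxKb n U * auxEW n V = auxEW n (U * V) := by
  classical
  have hι : Function.Injective (fun a : Fin u => (⟨a, lt_of_lt_of_le a.isLt hun⟩ : Fin n)) := by
    intro a b hab
    injection hab with hab'
    exact Fin.ext hab'
  ext i b
  rw [Matrix.mul_apply]
  rw [sum_range_inj _ hι _ ?side]
  case side =>
    intro j' hj'
    have hj'u : ¬ (j' : ℕ) < u := fun h => hj' ⟨⟨j', h⟩, rfl⟩
    simp only [auxEW]
    rw [dif_neg hj'u]
    ring
  by_cases hi : (i : ℕ) < u
  · have : ∀ a : Fin u,
        auxKb n U i ⟨a, lt_of_lt_of_le a.isLt hun⟩ * auxEW n V ⟨a, lt_of_lt_of_le a.isLt hun⟩ b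
          = U ⟨i, hi⟩ a * V a b := by
      intro a
      simp only [auxKb, auxEW]
      rw [dif_pos ⟨hi, a.isLt⟩, dif_pos a.isLt]
    rw [Finset.sum_congr rfl (fun a _ => this a)]
    simp only [auxEW]
    rw [dif_pos hi, Matrix.mul_apply]
  · simp only [auxEW]
    rw [dif_neg hi]
    apply Finset.sum_eq_zero
    intro a _
    simp only [auxKb]
    rw [dif_neg (by tauto), if_neg ?_]
    · ring
    · intro h
      rw [h] at hi
      exact hi a.isLt

lemma A_exists (X : Matrix (Fin n) (Fin u) k) (r : Fin u → Fin n)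
    (hr : Function.Injective r) (hW : IsUnit (X.submatrix r id).det) :
    ∃ A : Matrix (Fin n) (Fin n) k, IsUnit A.det ∧
      ∀ i a, (A * X) i a = if (i : ℕ) = (a : ℕ) then 1 else 0 := by
  classical
  have hun : u ≤ n := by
    have := Fintype.card_le_of_injective r hr
    simpa using this
  set W := X.submatrix r id with hWdef
  set P := X * W⁻¹ with hPdef
  -- the "clearing" matrix
  set S : Matrix (Fin n) (Fin n) k :=
    fun i j => if h : ∃ a, r a = j then (if i ∈ Set.range r then 0 else P i h.choose) else 0
    with hSdef
  have hSout : ∀ i j, j ∉ Set.range r → S i j = 0 := by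
    intro i j hj
    simp only [hSdef]
    rw [dif_neg (by rintro ⟨a, rfl⟩; exact hj ⟨a, rfl⟩)]
  have hSr : ∀ i a, S i (r a) = if i ∈ Set.range r then 0 else P i a := by
    intro i a
    have hex : ∃ a', r a' = r a := ⟨a, rfl⟩
    simp only [hSdef]
    rw [dif_pos hex]
    have : hex.choose = a := hr hex.choose_spec
    rw [this]
  have hSX : ∀ i b, (S * X) i b = if i ∈ Set.range r then 0 else X i b := by
    intro i b
    rw [Matrix.mul_apply]
    rw [sum_range_inj _ hr _ (fun j hj => by rw [hSout i j hj, zero_mul])]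
    by_cases hi : i ∈ Set.range r
    · rw [if_pos hi]
      apply Finset.sum_eq_zero
      intro a _
      rw [hSr i a, if_pos hi, zero_mul]
    · rw [if_neg hi]
      have : ∀ a, S i (r a) * X (r a) b = P i a * W a b := by
        intro a
        rw [hSr i a, if_neg hi]
        rfl
      rw [Finset.sum_congr rfl (fun a _ => this a), ← Matrix.mul_apply, hPdef,
        Matrix.nonsing_inv_mul_cancel_right _ _ hW]
  have hSS : S * S = 0 := by
    ext i j
    rw [Matrix.mul_apply, Matrix.zero_apply]
    apply Finset.sum_eq_zero
    intro j' _
    by_cases hj' : j' ∈ Set.range r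
    · have : S j' j = 0 := by
        by_cases hj : j ∈ Set.range r
        · obtain ⟨a, rfl⟩ := hj
          rw [hSr j' a, if_pos hj']
        · exact hSout j' j hj
      rw [this, mul_zero]
    · rw [hSout i j' hj', zero_mul]
  have hA1unit : IsUnit (1 - S).det := by
    apply IsUnit.of_mul_eq_one (1 + S).det
    rw [← Matrix.det_mul]
    have : (1 - S) * (1 + S) = 1 := by
      calc (1 - S) * (1 + S) = 1 + S - (S + S * S) := by rw [sub_mul, one_mul, mul_add, mul_one]
      _ = 1 := by rw [hSS, add_zero, add_sub_cancel_right]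
    rw [this, Matrix.det_one]
  -- the permutation
  set ι : Fin u → Fin n := fun a => ⟨a, lt_of_lt_of_le a.isLt hun⟩ with hιdef
  have hι : Function.Injective ι := by
    intro a b hab
    rw [hιdef] at hab
    injection hab with hab'
    exact Fin.ext hab'
  have hcards : Fintype.card ((Set.range r)ᶜ : Set (Fin n)) =
      Fintype.card ((Set.range ι)ᶜ : Set (Fin n)) := by
    rw [Fintype.card_compl_set, Fintype.card_compl_set, Set.card_range_of_injective hr,
      Set.card_range_of_injective hι]
  set τ : Equiv.Perm (Fin n) :=
    (Equiv.Set.sumCompl (Set.range r)).symm.trans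
      (((Equiv.ofInjective r hr).symm.trans (Equiv.ofInjective ι hι)).sumCongr
        (Fintype.equivOfCardEq hcards) |>.trans (Equiv.Set.sumCompl (Set.range ι))) with hτdef
  have hτ : ∀ a, τ (r a) = ι a := by
    intro a
    rw [hτdef]
    simp only [Equiv.trans_apply]
    have h1 : (Equiv.Set.sumCompl (Set.range r)).symm (r a) = Sum.inl ⟨r a, ⟨a, rfl⟩⟩ := by
      rw [Equiv.symm_apply_eq]
      simp
    rw [h1]
    simp only [Equiv.sumCongr_apply, Sum.map_inl, Equiv.trans_apply]
    have h2 : (Equiv.ofInjective r hr).symm ⟨r a, ⟨a, rfl⟩⟩ = a := by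
      apply (Equiv.ofInjective r hr).injective
      simp [Equiv.apply_symm_apply]
    rw [h2]
    simp
  set A2 : Matrix (Fin n) (Fin n) k := fun i j => if τ j = i then 1 else 0 with hA2def
  have hA2unit : IsUnit A2.det := by
    have : A2 = (1 : Matrix (Fin n) (Fin n) k).submatrix (⇑τ.symm) id := by
      ext i j
      simp only [hA2def, Matrix.submatrix_apply, Matrix.one_apply, id]
      by_cases h : τ j = i
      · rw [if_pos h, if_pos (by rw [← h]; simp)]
      · rw [if_neg h, if_neg (by intro hh; exact h (by rw [← hh]; simp))]
    rw [this, Matrix.det_permute, Matrix.det_one, mul_one]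
    rcases Int.units_eq_one_or (Equiv.Perm.sign τ.symm) with h | h <;> rw [h]
    · simp
    · simp only [Units.val_neg, Units.val_one, Int.cast_neg, Int.cast_one]
      exact IsUnit.neg isUnit_one
  have hA2mul : ∀ (M : Matrix (Fin n) (Fin u) k) i b, (A2 * M) i b = M (τ.symm i) b := by
    intro M i b
    rw [Matrix.mul_apply]
    rw [Finset.sum_eq_single (τ.symm i) ?h1 (by simp)]
    · simp [hA2def]
    · intro j' _ hj'
      simp only [hA2def]
      rw [if_neg fun h => hj' (by rw [← h]; simp), zero_mul]
  -- assemble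
  refine ⟨auxKb n W⁻¹ * (A2 * (1 - S)), ?_, ?_⟩
  · rw [Matrix.det_mul, Matrix.det_mul]
    exact (auxKb_isUnit hun (Matrix.isUnit_nonsing_inv_det _ hW)).mul (hA2unit.mul hA1unit)
  · intro i a
    rw [Matrix.mul_assoc, Matrix.mul_assoc]
    have step1 : @Eq (Matrix (Fin n) (Fin u) k) ((1 - S) * X) (fun i b => if i ∈ Set.range r then X i b else 0) := by
      ext i b
      rw [Matrix.sub_mul, Matrix.sub_apply, Matrix.one_mul, hSX]
      by_cases hi : i ∈ Set.range r
      · rw [if_pos hi, if_pos hi, sub_zero]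
      · rw [if_neg hi, if_neg hi, sub_self]
    have step2 : A2 * ((1 - S) * X) = auxEW n W := by
      ext i b
      rw [hA2mul, step1]
      simp only
      by_cases hi : (i : ℕ) < u
      · have hiι : i = ι ⟨i, hi⟩ := Fin.ext rfl
        have hτi : τ.symm i = r ⟨i, hi⟩ := by
          rw [Equiv.symm_apply_eq, hτ, ← hiι]
        simp only [auxEW]
        rw [hτi, if_pos ⟨⟨i, hi⟩, rfl⟩, dif_pos hi]
        rfl
      · simp only [auxEW]
        rw [dif_neg hi, if_neg ?_]
        rintro ⟨a', ha'⟩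
        have : τ (r a') = i := by rw [ha']; simp
        rw [hτ a'] at this
        apply hi
        rw [← this]
        exact a'.isLt
    rw [step2, auxKb_mul_EW hun, Matrix.nonsing_inv_mul _ hW]
    simp only [auxEW]
    by_cases hi : (i : ℕ) < u
    · rw [dif_pos hi, Matrix.one_apply]
      by_cases hia : (⟨i, hi⟩ : Fin u) = a
      · rw [if_pos hia, if_pos (by rw [← hia])]
      · rw [if_neg hia, if_neg (by intro h; exact hia (Fin.ext h))]
    · rw [dif_neg hi, if_neg (by intro h; rw [h] at hi; exact hi a.isLt)]

end Aexists

-- skeleton factorization of a matrix all of whose (u+1)-minors vanish,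
-- around an invertible u×u submatrix
lemma factor_lemma {k : Type*} [Field k] {n m u : ℕ} (ψ : Matrix (Fin n) (Fin m) k)
    (r : Fin u → Fin n) (c : Fin u → Fin m) (hr : Function.Injective r)
    (hc : Function.Injective c) (hT : IsUnit (ψ.submatrix r c).det)
    (H2 : ∀ (r' : Fin (u+1) → Fin n) (c' : Fin (u+1) → Fin m), Function.Injective r' →
      Function.Injective c' → (ψ.submatrix r' c').det = 0) :
    ψ = (ψ.submatrix id c) * ((ψ.submatrix r c)⁻¹ * (ψ.submatrix r id)) := by
  classical
  set T := ψ.submatrix r c with hTdef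
  ext i j
  -- the bordered matrix
  set B : Matrix (Fin u) (Fin 1) k := fun a _ => ψ (r a) j with hB
  set Cm : Matrix (Fin 1) (Fin u) k := fun _ b => ψ i (c b) with hC
  set D : Matrix (Fin 1) (Fin 1) k := fun _ _ => ψ i j with hD
  have hdet0 : (Matrix.fromBlocks T B Cm D).det = 0 := by
    set r' : Fin u ⊕ Fin 1 → Fin n := Sum.elim r (fun _ => i) with hr'
    set c' : Fin u ⊕ Fin 1 → Fin m := Sum.elim c (fun _ => j) with hc'
    have hsub : Matrix.fromBlocks T B Cm D = ψ.submatrix r' c' := by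
      ext x y
      cases x <;> cases y <;> rfl
    rw [hsub]
    by_cases hi : i ∈ Set.range r
    · obtain ⟨a0, ha0⟩ := hi
      apply Matrix.det_zero_of_row_eq (i := Sum.inl a0) (j := Sum.inr 0) (by simp)
      funext y
      simp [hr', Matrix.submatrix_apply, ha0]
    · by_cases hj : j ∈ Set.range c
      · obtain ⟨b0, hb0⟩ := hj
        apply Matrix.det_zero_of_column_eq (i := Sum.inl b0) (j := Sum.inr 0) (by simp)
        intro x
        simp [hc', Matrix.submatrix_apply, hb0]
      · -- injective case
        have hr'inj : Function.Injective r' := by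
          rintro (x | x) (y | y) hxy <;> simp only [hr', Sum.elim_inl, Sum.elim_inr] at hxy
          · rw [hr hxy]
          · exact absurd ⟨x, hxy⟩ hi
          · exact absurd ⟨y, hxy.symm⟩ hi
          · rw [Subsingleton.elim x y]
        have hc'inj : Function.Injective c' := by
          rintro (x | x) (y | y) hxy <;> simp only [hc', Sum.elim_inl, Sum.elim_inr] at hxy
          · rw [hc hxy]
          · exact absurd ⟨x, hxy⟩ hj
          · exact absurd ⟨y, hxy.symm⟩ hj
          · rw [Subsingleton.elim x y]
        have he : (ψ.submatrix r' c').det =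
            (ψ.submatrix (r' ∘ ⇑finSumFinEquiv.symm) (c' ∘ ⇑finSumFinEquiv.symm)).det := by
          rw [← Matrix.submatrix_submatrix, Matrix.det_submatrix_equiv_self]
        rw [he]
        exact H2 _ _ (hr'inj.comp finSumFinEquiv.symm.injective)
          (hc'inj.comp finSumFinEquiv.symm.injective)
  have : Invertible T := T.invertibleOfIsUnitDet hT
  rw [Matrix.det_fromBlocks₁₁] at hdet0
  have hdetT : T.det ≠ 0 := hT.ne_zero
  have h2 : (D - Cm * ⅟T * B).det = 0 := by
    rcases mul_eq_zero.mp hdet0 with h | h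
    · exact absurd h hdetT
    · exact h
  rw [Matrix.det_fin_one, Matrix.sub_apply] at h2
  have h3 : ψ i j = (Cm * ⅟T * B) 0 0 := sub_eq_zero.mp h2
  rw [h3, invOf_eq_nonsing_inv, Matrix.mul_assoc]
  simp only [Matrix.mul_apply, Matrix.submatrix_apply, id]
  rfl

lemma normal_form {k : Type*} [Field k] {n m u : ℕ} (ψ : Matrix (Fin n) (Fin m) k)
    (r : Fin u → Fin n) (c : Fin u → Fin m) (hr : Function.Injective r)
    (hc : Function.Injective c) (hdet : (ψ.submatrix r c).det ≠ 0)
    (H2 : ∀ (r' : Fin (u+1) → Fin n) (c' : Fin (u+1) → Fin m), Function.Injective r' →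
      Function.Injective c' → (ψ.submatrix r' c').det = 0)
    (A_exists : ∀ {n' u' : ℕ} (X : Matrix (Fin n') (Fin u') k) (r' : Fin u' → Fin n'),
      Function.Injective r' → IsUnit (X.submatrix r' id).det →
      ∃ A : Matrix (Fin n') (Fin n') k, IsUnit A.det ∧
        ∀ i a, (A * X) i a = if (i : ℕ) = (a : ℕ) then 1 else 0) :
    ∃ (A : Matrix (Fin n) (Fin n) k) (C : Matrix (Fin m) (Fin m) k),
      IsUnit A.det ∧ IsUnit C.det ∧
      ∀ i j, (A * ψ * C) i j = if (i : ℕ) = (j : ℕ) ∧ (i : ℕ) < u then 1 else 0 := by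
  classical
  set T := ψ.submatrix r c with hTdef
  have hT : IsUnit T.det := isUnit_iff_ne_zero.mpr hdet
  set X := ψ.submatrix id c with hX
  set Y' := T⁻¹ * ψ.submatrix r id with hY'
  have hfactor : ψ = X * Y' := factor_lemma ψ r c hr hc hT H2
  -- A side
  have hXr : X.submatrix r id = T := by
    ext a b
    rfl
  obtain ⟨A, hAdet, hA⟩ := A_exists X r hr (by rw [hXr]; exact hT)
  -- C side
  set Z := Y'ᵀ with hZ
  have hZc : Z.submatrix c id = 1 := by
    have hYc : Y'.submatrix id c = 1 := by
      have h1 : Y'.submatrix id c = T⁻¹ * (ψ.submatrix r id).submatrix id c := by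
        ext a b
        simp [hY', Matrix.mul_apply, Matrix.submatrix_apply]
      have h2 : (ψ.submatrix r id).submatrix id c = T := by
        ext a b
        rfl
      rw [h1, h2, Matrix.nonsing_inv_mul _ hT]
    ext a b
    rw [Matrix.submatrix_apply, hZ, Matrix.transpose_apply, id]
    have := congrFun (congrFun hYc b) a
    rw [Matrix.submatrix_apply, id] at this
    rw [this, Matrix.one_apply, Matrix.one_apply]
    by_cases h : a = b
    · rw [if_pos h, if_pos h.symm]
    · rw [if_neg h, if_neg (Ne.symm h)]
  obtain ⟨D, hDdet, hD⟩ := A_exists Z c hc (by rw [hZc]; exact isUnit_one.map (Matrix.detMonoidHom))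
  refine ⟨A, Dᵀ, hAdet, by rwa [Matrix.det_transpose], ?_⟩
  intro i j
  rw [hfactor, ← Matrix.mul_assoc A X Y', Matrix.mul_assoc (A * X) Y' Dᵀ, Matrix.mul_apply]
  have hterm : ∀ a : Fin u, (A * X) i a * (Y' * Dᵀ) a j =
      (if (i : ℕ) = (a : ℕ) then 1 else 0) * (if (j : ℕ) = (a : ℕ) then 1 else 0) := by
    intro a
    rw [hA]
    congr 1
    have : (Y' * Dᵀ) a j = (D * Z) j a := by
      rw [Matrix.mul_apply, Matrix.mul_apply]
      apply Finset.sum_congr rfl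
      intro b _
      rw [Matrix.transpose_apply, hZ, Matrix.transpose_apply, mul_comm]
    rw [this, hD]
  rw [Finset.sum_congr rfl (fun a _ => hterm a)]
  by_cases h : (i : ℕ) = (j : ℕ) ∧ (i : ℕ) < u
  · rw [if_pos h]
    rw [Finset.sum_eq_single ⟨(i : ℕ), h.2⟩]
    · rw [if_pos rfl, if_pos h.1.symm, one_mul]
    · intro b _ hb
      rw [if_neg ?_, zero_mul]
      intro hib
      exact hb (Fin.ext hib.symm)
    · intro hmem
      exact absurd (Finset.mem_univ _) hmem
  · rw [if_neg h]
    apply Finset.sum_eq_zero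
    intro a _
    by_cases hia : (i : ℕ) = (a : ℕ)
    · rw [if_pos hia]
      rw [if_neg ?_, mul_zero]
      intro hja
      exact h ⟨by rw [hia, hja], by rw [hia]; exact a.isLt⟩
    · rw [if_neg hia, zero_mul]

lemma eval_minor {k : Type*} [Field k] {d n m : ℕ}
    (φ : Matrix (Fin n) (Fin m) (MvPolynomial (Fin d) k))
    (x : Fin d → k) {j : ℕ} (r : Fin j → Fin n) (c : Fin j → Fin m) :
    MvPolynomial.eval x ((φ.submatrix r c).det) =
      (((φ.map (MvPolynomial.eval x)).submatrix r c)).det := by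
  rw [RingHom.map_det]
  congr 1

lemma eval_entry_zero {k : Type*} [Field k] {d n m : ℕ}
    (φ : Matrix (Fin n) (Fin m) (MvPolynomial (Fin d) k))
    (hφlin : ∀ i j, (φ i j).IsHomogeneous 1) (i : Fin n) (j : Fin m) :
    MvPolynomial.eval (0 : Fin d → k) (φ i j) = 0 := by
  rw [MvPolynomial.eval_zero]
  have := (hφlin i j).coeff_eq_zero (d := 0) (by simp [Finsupp.degree])
  rwa [MvPolynomial.constantCoeff_eq]

-- membership of each point of the zero locus of the minors ideal
lemma mem_zeroLocus_minors {k : Type*} [Field k] {d n m : ℕ}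
    (φ : Matrix (Fin n) (Fin m) (MvPolynomial (Fin d) k)) {j : ℕ} {x : Fin d → k}
    (h : ∀ (r : Fin j → Fin n) (c : Fin j → Fin m), Function.Injective r →
      Function.Injective c → MvPolynomial.eval x ((φ.submatrix r c).det) = 0) :
    x ∈ MvPolynomial.zeroLocus k (minorsIdeal φ j) := by
  rw [MvPolynomial.mem_zeroLocus_iff]
  apply eval_zero_of_span
  rintro g ⟨r, c, hr, hc, rfl⟩
  exact h r c hr hc

lemma exists_good_point {k : Type*} [Field k] [IsAlgClosed k] {d n m u : ℕ}
    (hd : 3 ≤ d)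
    (φ : Matrix (Fin n) (Fin m) (MvPolynomial (Fin d) k))
    (hφlin : ∀ i j, (φ i j).IsHomogeneous 1)
    (hI1 : minorsIdeal φ 1 = Ideal.span (Set.range MvPolynomial.X))
    (hu1 : 1 ≤ u)
    (hu : idealHeight (minorsIdeal φ (u + 1)) = ((d - 1 : ℕ) : ℕ∞))
    (huleast : ∀ v : ℕ, 1 ≤ v →
      idealHeight (minorsIdeal φ (v + 1)) = ((d - 1 : ℕ) : ℕ∞) → u ≤ v) :
    ∃ p : Fin d → k,
      (∀ (r : Fin (u+1) → Fin n) (c : Fin (u+1) → Fin m), Function.Injective r →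
        Function.Injective c → ((φ.map (MvPolynomial.eval p)).submatrix r c).det = 0) ∧
      (∃ (r : Fin u → Fin n) (c : Fin u → Fin m), Function.Injective r ∧
        Function.Injective c ∧ ((φ.map (MvPolynomial.eval p)).submatrix r c).det ≠ 0) := by
  classical
  have hlt : idealHeight (minorsIdeal φ (u + 1)) < (d : ℕ∞) := by
    rw [hu]
    exact_mod_cast Nat.cast_lt.mpr (by omega : d - 1 < d)
  obtain ⟨x0, hx0ne, hx0mem⟩ := exists_nonzero_zero _ hlt
  by_contra hcon
  push_neg at hcon
  -- every nonzero point killing the (u+1)-minors kills the u-minors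
  have hkill : ∀ x : Fin d → k, x ∈ MvPolynomial.zeroLocus k (minorsIdeal φ (u+1)) →
      x ∈ MvPolynomial.zeroLocus k (minorsIdeal φ u) := by
    intro x hx
    by_cases hxz : x = 0
    · subst hxz
      apply mem_zeroLocus_minors
      intro r c hr hc
      rw [eval_minor]
      have hzero : (φ.map (MvPolynomial.eval (0 : Fin d → k))).submatrix r c = 0 := by
        ext a b
        simp only [Matrix.submatrix_apply, Matrix.map_apply, Matrix.zero_apply]
        exact eval_entry_zero φ hφlin _ _
      rw [hzero]
      have : Nonempty (Fin u) := ⟨⟨0, hu1⟩⟩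
      exact Matrix.det_zero
    · -- x nonzero: use hcon
      have h1 : ∀ (r : Fin (u+1) → Fin n) (c : Fin (u+1) → Fin m), Function.Injective r →
          Function.Injective c → ((φ.map (MvPolynomial.eval x)).submatrix r c).det = 0 := by
        intro r c hr hc
        rw [← eval_minor]
        exact MvPolynomial.mem_zeroLocus_iff.mp hx _
          (Ideal.subset_span ⟨r, c, hr, hc, rfl⟩)
      have h2 := hcon x h1
      apply mem_zeroLocus_minors
      intro r c hr hc
      rw [eval_minor]
      exact h2 r c hr hc
  have hVeq : MvPolynomial.zeroLocus k (minorsIdeal φ u) =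
      MvPolynomial.zeroLocus k (minorsIdeal φ (u+1)) := by
    apply Set.Subset.antisymm
    · intro x hx
      apply mem_zeroLocus_minors
      intro r c hr hc
      rw [eval_minor]
      apply minors_step
      · intro r' c' hr' hc'
        rw [← eval_minor]
        exact MvPolynomial.mem_zeroLocus_iff.mp hx _ (Ideal.subset_span ⟨r', c', hr', hc', rfl⟩)
      · exact hr
      · exact hc
    · exact hkill
  have hrad : (minorsIdeal φ u).radical = (minorsIdeal φ (u+1)).radical := by
    rw [← MvPolynomial.vanishingIdeal_zeroLocus_eq_radical (K := k),
      ← MvPolynomial.vanishingIdeal_zeroLocus_eq_radical (K := k), hVeq]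
  have hiff : ∀ P : PrimeSpectrum (MvPolynomial (Fin d) k),
      (minorsIdeal φ u ≤ P.asIdeal) ↔ (minorsIdeal φ (u+1) ≤ P.asIdeal) := by
    intro P
    constructor
    · intro h
      apply (P.isPrime.radical_le_iff).mp
      rw [← hrad]
      exact (P.isPrime.radical_le_iff).mpr h
    · intro h
      apply (P.isPrime.radical_le_iff).mp
      rw [hrad]
      exact (P.isPrime.radical_le_iff).mpr h
  have hht2 : idealHeight (minorsIdeal φ u) = idealHeight (minorsIdeal φ (u+1)) := by
    unfold idealHeight
    apply iInf_congr
    intro P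
    exact iInf_congr_Prop (hiff P) (fun _ => rfl)
  rcases Nat.lt_or_ge u 2 with hu2 | hu2
  · have hueq : u = 1 := by omega
    subst hueq
    have hx0u := hkill x0 hx0mem
    rw [hI1] at hx0u
    apply hx0ne
    funext a
    have := MvPolynomial.mem_zeroLocus_iff.mp hx0u (MvPolynomial.X a)
      (Ideal.subset_span ⟨a, rfl⟩)
    simpa using this
  · have hkey : idealHeight (minorsIdeal φ ((u-1)+1)) = ((d-1:ℕ) : ℕ∞) := by
      rw [show u - 1 + 1 = u from by omega, hht2]
      exact hu
    have := huleast (u-1) (by omega) hkey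
    omega

theorem stmt_12
    (k : Type*) [Field k] [IsAlgClosed k] (d m : ℕ)
    (hd : 3 ≤ d) (hn : d + 1 ≤ m + 1)
    (φ : Matrix (Fin (m + 1)) (Fin m) (MvPolynomial (Fin d) k))
    (hφlin : ∀ i j, (φ i j).IsHomogeneous 1)
    (g : Fin (m + 1) → MvPolynomial (Fin d) k)
    (hg : ∀ i, g i = (-1) ^ (i : ℕ) * (φ.submatrix i.succAbove id).det)
    (hhtI : idealHeight (Ideal.span (Set.range g)) = 2)
    (hI1 : minorsIdeal φ 1 = Ideal.span (Set.range MvPolynomial.X))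
    (hG : ∀ j : ℕ, m + 1 - d + 2 ≤ j → j ≤ m →
      ((m + 1 - j + 1 : ℕ) : ℕ∞) ≤ idealHeight (minorsIdeal φ j))
    (hnG : idealHeight (minorsIdeal φ (m + 1 - d + 1)) ≤ ((d - 1 : ℕ) : ℕ∞))
    (u : ℕ) (hu1 : 1 ≤ u) (hu2 : u ≤ m + 1 - d)
    (hu : idealHeight (minorsIdeal φ (u + 1)) = ((d - 1 : ℕ) : ℕ∞))
    (huleast : ∀ v : ℕ, 1 ≤ v →
      idealHeight (minorsIdeal φ (v + 1)) = ((d - 1 : ℕ) : ℕ∞) → u ≤ v)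
    :
    ∃ (A : Matrix (Fin (m + 1)) (Fin (m + 1)) k) (C : Matrix (Fin m) (Fin m) k)
      (L : Matrix (Fin d) (Fin d) k),
      IsUnit A.det ∧ IsUnit C.det ∧ IsUnit L.det ∧
      ∃ M : Fin d → Matrix (Fin (m + 1)) (Fin m) k,
        (∀ i j, M ⟨0, by omega⟩ i j = if (i : ℕ) = (j : ℕ) ∧ (i : ℕ) < u then 1 else 0) ∧
        ∀ i j, MvPolynomial.aeval (fun a : Fin d => ∑ b : Fin d, L a b • MvPolynomial.X b)
            (((A.map (algebraMap k (MvPolynomial (Fin d) k))) * φ *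
              (C.map (algebraMap k (MvPolynomial (Fin d) k)))) i j)
          = ∑ a : Fin d, MvPolynomial.C (M a i j) * MvPolynomial.X a := by
  classical
  set B : Fin d → Matrix (Fin (m+1)) (Fin m) k :=
    fun a i j => MvPolynomial.coeff (Finsupp.single a 1) (φ i j) with hB
  obtain ⟨p, H2, r, c, hr, hc, hdet⟩ := exists_good_point hd φ hφlin hI1 hu1 hu huleast
  set ψ := φ.map (MvPolynomial.eval p) with hψ
  obtain ⟨A, Cc, hAdet, hCdet, hpattern⟩ :=
    normal_form ψ r c hr hc hdet H2 (fun X r' h1 h2 => A_exists X r' h1 h2)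
  have hpne : p ≠ 0 := by
    rintro rfl
    apply hdet
    have hz : ψ.submatrix r c = 0 := by
      ext a b
      simp only [hψ, Matrix.submatrix_apply, Matrix.map_apply, Matrix.zero_apply]
      exact eval_entry_zero φ hφlin _ _
    rw [hz]
    exact (haveI : Nonempty (Fin u) := ⟨⟨0, hu1⟩⟩; Matrix.det_zero)
  obtain ⟨a0, ha0⟩ : ∃ a, p a ≠ 0 := by
    by_contra h
    push_neg at h
    exact hpne (funext h)
  have hd0 : (0 : ℕ) < d := by omega
  set z : Fin d := ⟨0, hd0⟩ with hz
  set L : Matrix (Fin d) (Fin d) k :=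
    ((1 : Matrix (Fin d) (Fin d) k).updateCol a0 p).submatrix id ⇑(Equiv.swap z a0) with hL
  have hL0 : ∀ b, L b z = p b := by
    intro b
    rw [hL]
    simp only [Matrix.submatrix_apply, id, Equiv.swap_apply_left]
    rw [Matrix.updateCol_apply, if_pos rfl]
  have hLdet : IsUnit L.det := by
    rw [hL, Matrix.det_permute', ← Matrix.cramer_apply, Matrix.cramer_one]
    apply IsUnit.mul _ (isUnit_iff_ne_zero.mpr (by simpa using ha0))
    rcases Int.units_eq_one_or (Equiv.Perm.sign (Equiv.swap z a0)) with h | h <;> rw [h]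
    · simp
    · simp only [Units.val_neg, Units.val_one, Int.cast_neg, Int.cast_one]
      exact IsUnit.neg isUnit_one
  set N : Fin d → Matrix (Fin (m+1)) (Fin m) k := fun b => ∑ a, L a b • B a with hN
  set Mm : Fin d → Matrix (Fin (m+1)) (Fin m) k := fun b => A * N b * Cc with hMm
  have hNz : N z = ψ := by
    ext i' j'
    rw [hN]
    simp only [Matrix.sum_apply, Matrix.smul_apply, smul_eq_mul]
    rw [hψ, Matrix.map_apply]
    conv_rhs => rw [homog_decomp (φ i' j') (hφlin i' j')]
    rw [map_sum]
    apply Finset.sum_congr rfl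
    intro a _
    rw [_root_.map_mul, MvPolynomial.eval_C, MvPolynomial.eval_X, hL0, hB, mul_comm]
  refine ⟨A, Cc, L, hAdet, hCdet, hLdet, Mm, ?_, ?_⟩
  · intro i j
    have hkey : Mm z = A * ψ * Cc := by
      rw [hMm]
      simp only
      rw [hNz]
    have hkey2 : Mm z i j = (A * ψ * Cc) i j := by rw [hkey]
    exact hkey2.trans (hpattern i j)
  · intro i j
    set σf : Fin d → MvPolynomial (Fin d) k :=
      fun a => ∑ b : Fin d, L a b • MvPolynomial.X b with hσf
    -- entry of the product
    have step1 : ((A.map (algebraMap k (MvPolynomial (Fin d) k))) * φ *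
        (Cc.map (algebraMap k (MvPolynomial (Fin d) k)))) i j =
        ∑ t, (∑ s, MvPolynomial.C (A i s) * φ s t) * MvPolynomial.C (Cc t j) := by
      rw [Matrix.mul_apply]
      apply Finset.sum_congr rfl
      intro t _
      rw [Matrix.mul_apply]
      rw [show (Cc.map (algebraMap k (MvPolynomial (Fin d) k))) t j = MvPolynomial.C (Cc t j)
        from by rw [Matrix.map_apply, MvPolynomial.algebraMap_eq]]
      congr 1
    have hφσ : ∀ s t, (MvPolynomial.aeval σf) (φ s t) =
        ∑ b, MvPolynomial.C (N b s t) * MvPolynomial.X b := by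
      intro s t
      conv_lhs => rw [homog_decomp (φ s t) (hφlin s t)]
      rw [map_sum]
      have h1 : ∀ a : Fin d, (MvPolynomial.aeval σf) (MvPolynomial.C (B a s t) *
          MvPolynomial.X a) =
          ∑ b, MvPolynomial.C (B a s t * L a b) * MvPolynomial.X b := by
        intro a
        rw [_root_.map_mul, MvPolynomial.aeval_C, MvPolynomial.aeval_X, hσf]
        simp only
        rw [MvPolynomial.algebraMap_eq, Finset.mul_sum]
        apply Finset.sum_congr rfl
        intro b _
        rw [MvPolynomial.smul_eq_C_mul, ← mul_assoc, ← MvPolynomial.C_mul]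
      rw [Finset.sum_congr rfl (fun a _ => h1 a), Finset.sum_comm]
      apply Finset.sum_congr rfl
      intro b _
      rw [hN]
      simp only [Matrix.sum_apply, Matrix.smul_apply, smul_eq_mul]
      rw [map_sum, Finset.sum_mul]
      apply Finset.sum_congr rfl
      intro a _
      rw [mul_comm (B a s t) (L a b), MvPolynomial.C_mul]
    -- main computation
    rw [step1, map_sum]
    have step2 : ∀ t, (MvPolynomial.aeval σf)
        ((∑ s, MvPolynomial.C (A i s) * φ s t) * MvPolynomial.C (Cc t j)) =
        ∑ b, (∑ s, MvPolynomial.C (A i s) * MvPolynomial.C (N b s t)) *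
          MvPolynomial.C (Cc t j) * MvPolynomial.X b := by
      intro t
      rw [_root_.map_mul, map_sum, MvPolynomial.aeval_C, MvPolynomial.algebraMap_eq]
      have h2 : ∀ s, (MvPolynomial.aeval σf) (MvPolynomial.C (A i s) * φ s t) =
          ∑ b, MvPolynomial.C (A i s) * MvPolynomial.C (N b s t) * MvPolynomial.X b := by
        intro s
        rw [_root_.map_mul, MvPolynomial.aeval_C, MvPolynomial.algebraMap_eq, hφσ, Finset.mul_sum]
        apply Finset.sum_congr rfl
        intro b _
        ring
      rw [Finset.sum_congr rfl (fun s _ => h2 s), Finset.sum_comm, Finset.sum_mul]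
      apply Finset.sum_congr rfl
      intro b _
      rw [Finset.sum_mul, Finset.sum_mul, Finset.sum_mul]
      apply Finset.sum_congr rfl
      intro s _
      ring
    rw [Finset.sum_congr rfl (fun t _ => step2 t), Finset.sum_comm]
    apply Finset.sum_congr rfl
    intro b _
    have hMb : Mm b i j = ∑ t, (∑ s, A i s * N b s t) * Cc t j := by
      rw [hMm]
      simp only
      rw [Matrix.mul_apply]
      apply Finset.sum_congr rfl
      intro t _
      rw [Matrix.mul_apply]
    have hscal : (∑ t, (∑ s, MvPolynomial.C (A i s) * MvPolynomial.C (N b s t)) *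
        MvPolynomial.C (Cc t j) : MvPolynomial (Fin d) k) = MvPolynomial.C (Mm b i j) := by
      rw [hMb, map_sum]
      apply Finset.sum_congr rfl
      intro t _
      rw [MvPolynomial.C_mul]
      congr 1
      rw [map_sum]
      apply Finset.sum_congr rfl
      intro s _
      rw [MvPolynomial.C_mul]
    rw [← Finset.sum_mul, hscal]
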